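/- Let (y_t)_{t∈ℤ} be covariance-stationary white noise with variance σ² > 0, and for integers m ≥ 1 and 0 ≤ n ≤ 2^m − 1 define W_{m,n,t} = ∑_{l∈ℤ} v_{m,n,l} y_{t−l}. Then for every m ≥ 1 and every t ∈ ℤ, the variance of y decomposes exactly over the 2^m frequency sub-bands at scale m: Var(y_t) = ∑_{n=0}^{2^m−1} Var(W_{m,n,t}). -/

import Mathlib

open MeasureTheory ProbabilityTheory Filter

/-- Filter selector `u_n`: equals `g` if `n mod 4 ∈ {0,3}` and `h` if `n mod 4 ∈ {1,2}`. -/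
noncomputable def uF (g h : ℤ → ℝ) (n : ℕ) : ℤ → ℝ :=
  fun l => if n % 4 = 0 ∨ n % 4 = 3 then g l else h l

/-- MODWPT wavelet packet filters `v_{m,n}`, defined recursively by `v_{1,0} = g`,
`v_{1,1} = h`, and `v_{m,n,l} = ∑_k u_{n,k} v_{m-1, ⌊n/2⌋, l - 2^(m-1) k}`. -/
noncomputable def wp (g h : ℤ → ℝ) : ℕ → ℕ → ℤ → ℝ
  | 0, _, _ => 0
  | 1, n, l => if n = 0 then g l else h l
  | (m + 2), n, l => ∑ᶠ k : ℤ, uF g h n k * wp g h (m + 1) (n / 2) (l - 2 ^ (m + 1) * k)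


lemma integrable_mul_of_L2 {Ω : Type} [MeasureSpace Ω] [IsProbabilityMeasure (ℙ : Measure Ω)]
    {f g : Ω → ℝ} (hf : MemLp f 2) (hg : MemLp g 2) :
    Integrable (fun ω => f ω * g ω) := by
  have h1 : Integrable (fun ω => ((f ω + g ω) ^ 2 - f ω ^ 2 - g ω ^ 2) / 2) := by
    refine Integrable.div_const (Integrable.sub (Integrable.sub ?_ hf.integrable_sq)
      hg.integrable_sq) 2
    have := (hf.add hg).integrable_sq
    simpa [Pi.add_apply] using this
  have : (fun ω => f ω * g ω) = fun ω => ((f ω + g ω) ^ 2 - f ω ^ 2 - g ω ^ 2) / 2 := by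
    funext ω; ring
  rw [this]; exact h1

lemma var_lin {Ω : Type} [MeasureSpace Ω] [IsProbabilityMeasure (ℙ : Measure Ω)]
    (y : ℤ → Ω → ℝ) (σ2 : ℝ)
    (hL2 : ∀ t : ℤ, MemLp (y t) 2)
    (hmean : ∀ t : ℤ, ∫ ω, y t ω = 0)
    (hvar : ∀ t : ℤ, ∫ ω, (y t ω) ^ 2 = σ2)
    (huncorr : ∀ s t : ℤ, s ≠ t → ∫ ω, y s ω * y t ω = 0)
    (v : ℤ → ℝ) (T : Finset ℤ) (hv : ∀ l ∉ T, v l = 0) (t : ℤ) :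
    variance (fun ω => ∑ᶠ l : ℤ, v l * y (t - l) ω) ℙ = σ2 * ∑ l ∈ T, (v l) ^ 2 := by
  have hfun : (fun ω => ∑ᶠ l : ℤ, v l * y (t - l) ω)
      = fun ω => ∑ l ∈ T, v l * y (t - l) ω := by
    funext ω
    refine finsum_eq_finset_sum_of_support_subset _ ?_
    intro l hl
    simp only [Function.mem_support, Finset.coe_sort_coe, Finset.mem_coe] at hl ⊢
    by_contra hlT
    exact hl (by rw [hv l hlT, zero_mul])
  have hX : MemLp (fun ω => ∑ l ∈ T, v l * y (t - l) ω) 2 :=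
    memLp_finset_sum T fun l _ => (hL2 (t - l)).const_mul (v l)
  rw [hfun, variance_eq_sub hX]
  have hE : (∫ ω, ∑ l ∈ T, v l * y (t - l) ω) = 0 := by
    rw [integral_finset_sum T
      (fun l _ => (((hL2 (t - l)).integrable one_le_two).const_mul (v l)))]
    simp [integral_const_mul, hmean]
  have hint : ∀ l l' : ℤ, (∫ ω, y (t - l) ω * y (t - l') ω) = if l = l' then σ2 else 0 := by
    intro l l'
    by_cases hll : l = l'
    · subst hll
      simp only [if_pos rfl]
      rw [← hvar (t - l)]
      congr 1; funext ω; ring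
    · rw [if_neg hll]
      exact huncorr _ _ (by intro hc; exact hll (by omega))
  have hE2 : (∫ ω, (∑ l ∈ T, v l * y (t - l) ω) ^ 2) = σ2 * ∑ l ∈ T, (v l) ^ 2 := by
    have hsq : ∀ ω : Ω, (∑ l ∈ T, v l * y (t - l) ω) ^ 2
        = ∑ l ∈ T, ∑ l' ∈ T, (v l * v l') * (y (t - l) ω * y (t - l') ω) := by
      intro ω
      rw [sq, Finset.sum_mul_sum]
      exact Finset.sum_congr rfl fun l _ => Finset.sum_congr rfl fun l' _ => by ring
    simp_rw [hsq]
    rw [integral_finset_sum T (fun l _ => integrable_finset_sum T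
      (fun l' _ => (integrable_mul_of_L2 (hL2 (t - l)) (hL2 (t - l'))).const_mul _))]
    have : ∀ l ∈ T, (∫ ω, ∑ l' ∈ T, (v l * v l') * (y (t - l) ω * y (t - l') ω))
        = v l ^ 2 * σ2 := by
      intro l hl
      rw [integral_finset_sum T
        (fun l' _ => (integrable_mul_of_L2 (hL2 (t - l)) (hL2 (t - l'))).const_mul _)]
      have : ∀ l' ∈ T, (∫ ω, (v l * v l') * (y (t - l) ω * y (t - l') ω))
          = if l = l' then v l * v l' * σ2 else 0 := by
        intro l' _
        rw [integral_const_mul, hint l l']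
        by_cases hll : l = l' <;> simp [hll]
      rw [Finset.sum_congr rfl this, Finset.sum_ite_eq T l (fun l' => v l * v l' * σ2),
        if_pos hl]
      ring
    rw [Finset.sum_congr rfl this, ← Finset.sum_mul]
    ring
  rw [hE]
  simp only [Pi.pow_apply]
  rw [hE2]
  ring

lemma uF_cases (g h : ℤ → ℝ) (n : ℕ) : uF g h n = g ∨ uF g h n = h := by
  by_cases hc : n % 4 = 0 ∨ n % 4 = 3
  · left; funext l; simp [uF, hc]
  · right; funext l; simp [uF, hc]

lemma wp_key (g h : ℤ → ℝ) (L : ℕ) (hL : 0 < L)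
    (hsg : ∀ l : ℤ, l ∉ Finset.Icc (0:ℤ) ((L:ℤ)-1) → g l = 0)
    (hsh : ∀ l : ℤ, l ∉ Finset.Icc (0:ℤ) ((L:ℤ)-1) → h l = 0)
    (hog : ∀ j : ℤ, ∑ᶠ l : ℤ, g l * g (l + 2*j) = if j = 0 then (1/2:ℝ) else 0)
    (hoh : ∀ j : ℤ, ∑ᶠ l : ℤ, h l * h (l + 2*j) = if j = 0 then (1/2:ℝ) else 0) :
    ∀ m : ℕ, 1 ≤ m → ∀ n : ℕ,
      (∀ l : ℤ, l ∉ Finset.Icc (0:ℤ) (((2^m : ℤ)-1)*((L:ℤ)-1)) → wp g h m n l = 0) ∧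
      (∀ j : ℤ, ∑ᶠ l : ℤ, wp g h m n l * wp g h m n (l + 2^m * j)
          = if j = 0 then ((1/2:ℝ))^m else 0) := by
  have hL1 : (0:ℤ) ≤ (L:ℤ) - 1 := by omega
  intro m hm
  induction m, hm using Nat.le_induction with
  | base =>
    intro n
    have hcase : wp g h 1 n = g ∨ wp g h 1 n = h := by
      by_cases hn : n = 0
      · left; funext l; simp [wp, hn]
      · right; funext l; simp [wp, hn]
    have hb : ((2^1 : ℤ) - 1) * ((L:ℤ) - 1) = (L:ℤ) - 1 := by ring
    constructor
    · intro l hl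
      rw [hb] at hl
      rcases hcase with hc | hc <;> rw [hc] <;> [exact hsg l hl; exact hsh l hl]
    · intro j
      have h21 : ((2:ℤ)^1 : ℤ) = 2 := by norm_num
      have h121 : ((1/2:ℝ))^1 = 1/2 := by norm_num
      rcases hcase with hc | hc <;> rw [hc, h21, h121] <;> [exact hog j; exact hoh j]
  | succ m hm IH =>
    intro n
    obtain ⟨m', rfl⟩ : ∃ m', m = m' + 1 := ⟨m - 1, by omega⟩
    set c : ℤ := 2 ^ (m' + 1) with hc
    have hcpos : (0:ℤ) < c := by positivity
    set u : ℤ → ℝ := uF g h n with hu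
    set v : ℤ → ℝ := wp g h (m' + 1) (n / 2) with hv
    set S : Finset ℤ := Finset.Icc (0:ℤ) ((L:ℤ)-1) with hS
    set T : Finset ℤ := Finset.Icc (0:ℤ) (((2^(m'+1) : ℤ)-1)*((L:ℤ)-1)) with hT
    set U : Finset ℤ := Finset.Icc (0:ℤ) (((2^(m'+2) : ℤ)-1)*((L:ℤ)-1)) with hU
    have husupp : ∀ k : ℤ, k ∉ S → u k = 0 := by
      rcases uF_cases g h n with hc' | hc' <;> rw [hu, hc'] <;> [exact hsg; exact hsh]
    have huorth : ∀ j : ℤ, ∑ᶠ k : ℤ, u k * u (k + 2*j) = if j = 0 then (1/2:ℝ) else 0 := by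
      rcases uF_cases g h n with hc' | hc' <;> rw [hu, hc'] <;> [exact hog; exact hoh]
    obtain ⟨hvsupp, hvorth⟩ := IH (n / 2)
    -- finite-sum form of the recursion
    have hwp : ∀ l : ℤ, wp g h (m' + 2) n l = ∑ k ∈ S, u k * v (l - c * k) := by
      intro l
      show (∑ᶠ k : ℤ, uF g h n k * wp g h (m' + 1) (n / 2) (l - 2 ^ (m' + 1) * k)) = _
      refine finsum_eq_finset_sum_of_support_subset _ ?_
      intro k hk
      simp only [Function.mem_support, Finset.coe_sort_coe, Finset.mem_coe] at hk ⊢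
      by_contra hkS
      have h0 := husupp k hkS
      rw [hu] at h0
      exact hk (by rw [h0, zero_mul])
    have hvz : ∀ x : ℤ, (x < 0 ∨ ((2^(m'+1) : ℤ)-1)*((L:ℤ)-1) < x) → v x = 0 := by
      intro x hx
      exact hvsupp x (by rw [Finset.mem_Icc]; omega)
    -- support bound at level m'+2
    have hWsupp : ∀ l : ℤ, l ∉ U → wp g h (m' + 2) n l = 0 := by
      intro l hl
      rw [Finset.mem_Icc, not_and_or] at hl
      rw [hwp]
      refine Finset.sum_eq_zero fun k hk => ?_
      rw [hS, Finset.mem_Icc] at hk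
      have hck : 0 ≤ c * k := mul_nonneg hcpos.le hk.1
      have hck2 : c * k ≤ c * ((L:ℤ)-1) := mul_le_mul_of_nonneg_left hk.2 hcpos.le
      have h2 : ((2:ℤ)^(m'+2)) = 2 * c := by rw [hc]; ring
      have hvx : v (l - c * k) = 0 := by
        apply hvz
        rcases hl with hl | hl
        · left; omega
        · right
          push_neg at hl
          rw [h2] at hl
          nlinarith
      rw [hvx, mul_zero]
    refine ⟨hWsupp, ?_⟩
    intro j
    have hWU : Function.support (fun l => wp g h (m'+2) n l * wp g h (m'+2) n (l + 2^(m'+2) * j)) ⊆ (U : Set ℤ) := by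
      intro l hl
      simp only [Function.mem_support, Finset.coe_sort_coe, Finset.mem_coe] at hl ⊢
      by_contra hlU
      exact hl (by rw [hWsupp l hlU, zero_mul])
    rw [finsum_eq_finset_sum_of_support_subset _ hWU]
    have hexp : ∀ l ∈ U, wp g h (m'+2) n l * wp g h (m'+2) n (l + 2^(m'+2) * j)
        = ∑ k ∈ S, ∑ k' ∈ S, (u k * u k') * (v (l - c*k) * v ((l - c*k) + c*(2*j + k - k'))) := by
      intro l _
      rw [hwp, hwp, Finset.sum_mul_sum]
      refine Finset.sum_congr rfl fun k _ => Finset.sum_congr rfl fun k' _ => ?_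
      have : l + 2^(m'+2) * j - c * k' = (l - c*k) + c*(2*j + k - k') := by rw [hc]; ring
      rw [this]; ring
    rw [Finset.sum_congr rfl hexp]
    rw [Finset.sum_comm]
    have hstep : ∀ k ∈ S, (∑ l ∈ U, ∑ k' ∈ S, (u k * u k') * (v (l - c*k) * v ((l - c*k) + c*(2*j + k - k'))))
        = u k * u (k + 2*j) * (1/2:ℝ)^(m'+1) := by
      intro k hk
      rw [Finset.sum_comm]
      have hkb := Finset.mem_Icc.mp hk
      have hinner : ∀ k' ∈ S, (∑ l ∈ U, (u k * u k') * (v (l - c*k) * v ((l - c*k) + c*(2*j + k - k'))))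
          = if k' = k + 2*j then u k * u k' * (1/2:ℝ)^(m'+1) else 0 := by
        intro k' _
        rw [← Finset.mul_sum]
        have hsub : Function.support (fun l => v (l - c*k) * v ((l - c*k) + c*(2*j + k - k'))) ⊆ (U : Set ℤ) := by
          intro l hl
          simp only [Function.mem_support, Finset.coe_sort_coe, Finset.mem_coe] at hl ⊢
          have hv1 : v (l - c*k) ≠ 0 := fun h0 => hl (by rw [h0, zero_mul])
          have hlT : l - c*k ∈ T := by
            by_contra hlt
            exact hv1 (hvsupp _ hlt)
          rw [hT, Finset.mem_Icc] at hlT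
          rw [hU, Finset.mem_Icc]
          have hck : 0 ≤ c * k := mul_nonneg hcpos.le hkb.1
          have hck2 : c * k ≤ c * ((L:ℤ)-1) := mul_le_mul_of_nonneg_left hkb.2 hcpos.le
          have h2 : ((2:ℤ)^(m'+2)) = 2 * c := by rw [hc]; ring
          constructor
          · omega
          · rw [h2]; nlinarith
        rw [← finsum_eq_finset_sum_of_support_subset _ hsub]
        have htrans : ∑ᶠ l : ℤ, v (l - c*k) * v ((l - c*k) + c*(2*j + k - k'))
            = ∑ᶠ x : ℤ, v x * v (x + c*(2*j + k - k')) :=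
          finsum_comp_equiv (Equiv.subRight (c*k)) (f := fun x => v x * v (x + c*(2*j + k - k')))
        rw [htrans, hvorth (2*j + k - k')]
        by_cases hcond : 2*j + k - k' = 0
        · rw [if_pos hcond, if_pos (by omega)]
        · rw [if_neg hcond, if_neg (by omega), mul_zero]
      rw [Finset.sum_congr rfl hinner, Finset.sum_ite_eq' S (k + 2*j)
        (fun k' => u k * u k' * (1/2:ℝ)^(m'+1))]
      by_cases hmem : k + 2*j ∈ S
      · rw [if_pos hmem]
      · rw [if_neg hmem, husupp _ hmem, mul_zero, zero_mul]
    rw [Finset.sum_congr rfl hstep, ← Finset.sum_mul]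
    have hfin : ∑ k ∈ S, u k * u (k + 2*j) = if j = 0 then (1/2:ℝ) else 0 := by
      rw [← huorth j]
      refine (finsum_eq_finset_sum_of_support_subset _ ?_).symm
      intro k hk
      simp only [Function.mem_support, Finset.coe_sort_coe, Finset.mem_coe] at hk ⊢
      by_contra hkS
      exact hk (by rw [husupp k hkS, zero_mul])
    rw [hfin]
    by_cases hj : j = 0
    · rw [if_pos hj, if_pos hj, pow_succ]; ring
    · rw [if_neg hj, if_neg hj, zero_mul]


/-- For covariance-stationary white noise `y` with variance `σ² > 0`,
the variance decomposes exactly over the `2^m` frequency sub-bands at scale `m`: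
`Var(y_t) = ∑_{n=0}^{2^m-1} Var(W_{m,n,t})`. -/
theorem stmt1 (Ω : Type) [MeasureSpace Ω] [IsProbabilityMeasure (ℙ : Measure Ω)]
    (y : ℤ → Ω → ℝ) (σ2 : ℝ) (hσ : 0 < σ2)
    (hL2 : ∀ t : ℤ, MemLp (y t) 2)
    (hmean : ∀ t : ℤ, ∫ ω, y t ω = 0)
    (hvar : ∀ t : ℤ, ∫ ω, (y t ω) ^ 2 = σ2)
    (huncorr : ∀ s t : ℤ, s ≠ t → ∫ ω, y s ω * y t ω = 0)
    (L : ℕ) (hLpos : 0 < L) (hLeven : Even L)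
    (h : ℤ → ℝ)
    (hsupp : ∀ l : ℤ, (l < 0 ∨ (L : ℤ) ≤ l) → h l = 0)
    (hsum0 : ∑ᶠ l : ℤ, h l = 0)
    (hnorm : ∑ᶠ l : ℤ, (h l) ^ 2 = 1 / 2)
    (horth : ∀ k : ℤ, k ≠ 0 → ∑ᶠ l : ℤ, h l * h (l + 2 * k) = 0)
    (g : ℤ → ℝ) (hgdef : ∀ l : ℤ, g l = (-1 : ℝ) ^ (l + 1) * h ((L : ℤ) - 1 - l))
    (m : ℕ) (hm : 1 ≤ m) (t : ℤ) :
    variance (y t) ℙ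
      = ∑ n ∈ Finset.range (2 ^ m),
          variance (fun ω => ∑ᶠ l : ℤ, wp g h m n l * y (t - l) ω) ℙ := by
  have hsh : ∀ l : ℤ, l ∉ Finset.Icc (0:ℤ) ((L:ℤ)-1) → h l = 0 := by
    intro l hl
    rw [Finset.mem_Icc] at hl
    exact hsupp l (by omega)
  have hsg : ∀ l : ℤ, l ∉ Finset.Icc (0:ℤ) ((L:ℤ)-1) → g l = 0 := by
    intro l hl
    rw [Finset.mem_Icc] at hl
    rw [hgdef l, hsupp ((L:ℤ)-1-l) (by omega), mul_zero]
  have hoh : ∀ j : ℤ, ∑ᶠ l : ℤ, h l * h (l + 2*j) = if j = 0 then (1/2:ℝ) else 0 := by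
    intro j
    by_cases hj : j = 0
    · subst hj
      rw [if_pos rfl, ← hnorm]
      exact finsum_congr fun l => by rw [mul_zero, add_zero, sq]
    · rw [if_neg hj]; exact horth j hj
  have hog : ∀ j : ℤ, ∑ᶠ l : ℤ, g l * g (l + 2*j) = if j = 0 then (1/2:ℝ) else 0 := by
    intro j
    have hpt : ∀ l : ℤ, g l * g (l + 2*j)
        = h ((L:ℤ)-1-l) * h (((L:ℤ)-1-l) - 2*j) := by
      intro l
      rw [hgdef l, hgdef (l + 2*j)]
      have hsign : (-1:ℝ)^(l+1) * (-1:ℝ)^(l + 2*j + 1) = 1 := by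
        rw [← zpow_add₀ (by norm_num : (-1:ℝ) ≠ 0)]
        exact Even.neg_one_zpow ⟨l + j + 1, by ring⟩
      have harg : (L:ℤ) - 1 - (l + 2*j) = ((L:ℤ)-1-l) - 2*j := by ring
      rw [harg, mul_mul_mul_comm, hsign, one_mul]
    calc ∑ᶠ l : ℤ, g l * g (l + 2*j)
        = ∑ᶠ l : ℤ, h ((L:ℤ)-1-l) * h (((L:ℤ)-1-l) - 2*j) := finsum_congr hpt
      _ = ∑ᶠ x : ℤ, h x * h (x - 2*j) :=
          finsum_comp_equiv (Equiv.subLeft ((L:ℤ)-1)) (f := fun x => h x * h (x - 2*j))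
      _ = ∑ᶠ x : ℤ, h x * h (x + 2*(-j)) :=
          finsum_congr fun x => by
            have hx : x + 2*(-j) = x - 2*j := by ring
            rw [hx]
      _ = if -j = 0 then (1/2:ℝ) else 0 := hoh (-j)
      _ = if j = 0 then (1/2:ℝ) else 0 := by simp [neg_eq_zero]
  have key := wp_key g h L hLpos hsg hsh hog hoh m hm
  set T : Finset ℤ := Finset.Icc (0:ℤ) (((2^m : ℤ)-1)*((L:ℤ)-1)) with hTdef
  have henergy : ∀ n : ℕ, ∑ l ∈ T, (wp g h m n l)^2 = (1/2:ℝ)^m := by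
    intro n
    have h0 := (key n).2 0
    rw [if_pos rfl] at h0
    rw [← h0]
    have hsub : Function.support (fun l => wp g h m n l * wp g h m n (l + 2^m * 0))
        ⊆ (T : Set ℤ) := by
      intro l hl
      simp only [Function.mem_support, Finset.coe_sort_coe, Finset.mem_coe] at hl ⊢
      by_contra hlT
      exact hl (by rw [(key n).1 l hlT, zero_mul])
    rw [finsum_eq_finset_sum_of_support_subset _ hsub]
    exact Finset.sum_congr rfl fun l _ => by rw [mul_zero, add_zero, sq]
  have hvy : variance (y t) ℙ = σ2 := by
    rw [variance_eq_sub (hL2 t)]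
    have h1 : (∫ ω, ((y t)^2) ω) = σ2 := by
      simpa using hvar t
    rw [h1, hmean t]
    ring
  have hrhs : ∀ n ∈ Finset.range (2^m),
      variance (fun ω => ∑ᶠ l : ℤ, wp g h m n l * y (t - l) ω) ℙ = σ2 * (1/2:ℝ)^m := by
    intro n _
    rw [var_lin y σ2 hL2 hmean hvar huncorr (wp g h m n) T (key n).1 t, henergy n]
  rw [hvy, Finset.sum_congr rfl hrhs, Finset.sum_const, Finset.card_range, nsmul_eq_mul]
  have h2 : ((2:ℝ))^m * ((1/2:ℝ))^m = 1 := by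
    rw [← mul_pow]; norm_num
  push_cast
  linear_combination (-σ2) * h2
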